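/- If B is a differential basis of A over k (i.e., Ω_{A/k} is a free A-module with basis {d_{A/k}(b) : b ∈ B}), then B is p-independent over k, i.e., the p-monomials in B are linearly independent over A^p[k]. -/

import Mathlib

open scoped TensorProduct

/-- The monomial `∏ b^(α b)` associated to a finitely supported exponent tuple on `B`. -/
noncomputable def pMonomial {A : Type*} [CommRing A] {B : Set A} (α : B →₀ ℕ) : A :=
  α.prod fun b n => (b : A) ^ n

/-- `B` is `p`-independent over `k`: the `p`-monomials in `B` are linearly independent
over the subring `A^p[k]`. -/
def IsPIndependent (k : Type*) {A : Type*} [CommRing k] [CommRing A] [Algebra k A]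
    (p : ℕ) (B : Set A) : Prop :=
  LinearIndependent (Algebra.adjoin k (Set.range fun a : A => a ^ p))
    (fun α : {α : B →₀ ℕ // ∀ b, α b < p} => pMonomial α.1)

/-- `B` is a `p`-basis of `A` over `k`. -/
def IsPBasis (k : Type*) {A : Type*} [CommRing k] [CommRing A] [Algebra k A]
    (p : ℕ) (B : Set A) : Prop :=
  IsPIndependent k p B ∧
    Algebra.adjoin k ((Set.range fun a : A => a ^ p) ∪ B) = ⊤

/-- An absolute `p`-basis: a `p`-basis over the prime field (equivalently over `ℤ`). -/
def IsAbsolutePBasis {A : Type*} [CommRing A] (p : ℕ) (B : Set A) : Prop :=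
  IsPBasis ℤ p B

/-- `B` is a differential basis of `A` over `k`. -/
def IsDifferentialBasis (k : Type*) {A : Type*} [CommRing k] [CommRing A] [Algebra k A]
    (B : Set A) : Prop :=
  ∃ bas : Module.Basis B A (KaehlerDifferential k A),
    ∀ b : B, bas b = KaehlerDifferential.D k A (b : A)

/-- Regular local ring: noetherian local ring whose maximal ideal is generated by
(Krull-)dimension many elements. -/
def IsRegularLocalRing' (R : Type*) [CommRing R] : Prop :=
  IsLocalRing R ∧ IsNoetherianRing R ∧
    ∃ (n : ℕ) (z : Fin n → R), (Ideal.span (Set.range z)).IsMaximal ∧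
      ringKrullDim R = n

/-- Regular ring: noetherian and all localizations at primes are regular local. -/
def IsRegularRing' (A : Type*) [CommRing A] : Prop :=
  IsNoetherianRing A ∧ ∀ (P : Ideal A) (hP : P.IsPrime), IsRegularLocalRing' (Localization.AtPrime P)

/-- Differential operators of order at most `n` over `k`, defined inductively. -/
def IsDiffOp (k A M : Type*) [CommRing k] [CommRing A] [Algebra k A]
    [AddCommGroup M] [Module A M] [Module k M] [IsScalarTower k A M] :
    ℕ → (A → M) → Prop
  | 0, D => IsLinearMap A D
  | (n + 1), D => IsLinearMap k D ∧
      ∀ a : A, IsDiffOp k A M n (fun f => a • D f - D (a * f))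

/-- Product of binomial coefficients `∏_b C(α_b, β_b)`. -/
noncomputable def pBinom {A : Type*} [CommRing A] {B : Set A} (α β : B →₀ ℕ) : ℕ :=
  letI := Classical.decEq A
  ∏ b ∈ α.support ∪ β.support, Nat.choose (α b) (β b)

/-- Product of multinomial coefficients `∏_b (β_b+β'_b)!/(β_b!β'_b!)`. -/
noncomputable def pMultinom {A : Type*} [CommRing A] {B : Set A} (β β' : B →₀ ℕ) : ℕ :=
  letI := Classical.decEq A
  ∏ b ∈ β.support ∪ β'.support, Nat.choose (β b + β' b) (β b)

/-- Height of an ideal: the infimum of the Krull dimensions of localizations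
at primes containing it. -/
noncomputable def idealHeight {R : Type*} [CommRing R] (I : Ideal R) : WithBot (WithTop ℕ) :=
  ⨅ Q : {Q : Ideal R // Q.IsPrime ∧ I ≤ Q},
    ringKrullDim (Localization (@Ideal.primeCompl R _ Q.1 Q.2.1))

/-- Differential saturation of an ideal by absolute differential operators of order `≤ n`. -/
noncomputable def diffSat {A : Type*} [CommRing A] (n : ℕ) (I : Ideal A) : Ideal A :=
  Ideal.span {g | ∃ f ∈ I, ∃ Δ : A → A, IsDiffOp ℤ A A n Δ ∧ g = Δ f}

open scoped Classical

section aux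
variable {k A : Type*} [CommRing k] [CommRing A] [Algebra k A] {B : Set A}

lemma pMonomial_zero : pMonomial (0 : B →₀ ℕ) = (1 : A) := Finsupp.prod_zero_index

lemma pMonomial_add (α β : B →₀ ℕ) :
    (pMonomial (α + β) : A) = pMonomial α * pMonomial β :=
  Finsupp.prod_add_index' (fun b => pow_zero _) (fun b m n => pow_add _ _ _)

lemma pMonomial_single (b : B) (n : ℕ) :
    (pMonomial (Finsupp.single b n) : A) = (b : A) ^ n :=
  Finsupp.prod_single_index (pow_zero _)

lemma deriv_vanish_adjoin (p : ℕ) [CharP A p] (D : Derivation k A A) {a : A}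
    (ha : a ∈ Algebra.adjoin k (Set.range fun a : A => a ^ p)) : D a = 0 := by
  induction ha using Algebra.adjoin_induction with
  | mem x hx =>
      obtain ⟨y, rfl⟩ := hx
      rw [Derivation.leibniz_pow]
      simp [nsmul_eq_mul, CharP.cast_eq_zero A p]
  | algebraMap r => exact D.map_algebraMap r
  | add x y _ _ hx hy => rw [map_add, hx, hy, add_zero]
  | mul x y _ _ hx hy => rw [D.leibniz, hx, hy, smul_zero, smul_zero, add_zero]

lemma sub_add_single (α : B →₀ ℕ) (b : B) (hb : α b ≠ 0) :
    α - Finsupp.single b 1 + Finsupp.single b 1 = α := by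
  ext x
  by_cases hx : x = b
  · subst hx
    simp only [Finsupp.add_apply, Finsupp.tsub_apply, Finsupp.single_eq_same]
    omega
  · simp [Finsupp.tsub_apply, Finsupp.single_apply, Ne.symm hx, hx]

lemma deg_sub_single (α : B →₀ ℕ) (b : B) (hb : α b ≠ 0) :
    ((α - Finsupp.single b 1).sum fun _ m => m) + 1 = α.sum fun _ m => m := by
  conv_rhs => rw [← sub_add_single α b hb]
  rw [Finsupp.sum_add_index' (fun _ => rfl) (fun _ _ _ => rfl),
    Finsupp.sum_single_index rfl]

lemma deriv_pMonomial (D : Derivation k A A) (b : B)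
    (hD : ∀ b' : B, D (b' : A) = if b' = b then 1 else 0) (α : B →₀ ℕ) :
    D (pMonomial α) = (α b : A) * pMonomial (α - Finsupp.single b 1) := by
  induction α using Finsupp.induction with
  | zero => simp [pMonomial_zero]
  | single_add a n f haf hn ih =>
      rw [pMonomial_add, pMonomial_single, D.leibniz, ih, smul_eq_mul, smul_eq_mul,
        Derivation.leibniz_pow, hD a]
      by_cases hab : a = b
      · subst hab
        have hfb : f a = 0 := Finsupp.notMem_support_iff.mp haf
        have h1 : (Finsupp.single a n + f) - Finsupp.single a 1
            = Finsupp.single a (n - 1) + f := by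
          ext x
          by_cases hx : x = a
          · subst hx; simp [Finsupp.tsub_apply, hfb]
          · simp [Finsupp.tsub_apply, Finsupp.single_apply, Ne.symm hx, hx]
        rw [if_pos rfl, h1, pMonomial_add, pMonomial_single]
        simp only [Finsupp.add_apply, Finsupp.single_eq_same, hfb]
        simp only [add_zero, smul_eq_mul, nsmul_eq_mul, mul_one]
        ring
      · have h1 : (Finsupp.single a n + f) - Finsupp.single b 1
            = Finsupp.single a n + (f - Finsupp.single b 1) := by
          ext x
          by_cases hx : x = b
          · subst hx
            simp only [Finsupp.add_apply, Finsupp.tsub_apply,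
              Finsupp.single_eq_of_ne' hab, Finsupp.single_eq_same]
            omega
          · simp only [Finsupp.add_apply, Finsupp.tsub_apply,
              Finsupp.single_eq_of_ne' (Ne.symm hx)]
            omega
        rw [if_neg hab, h1, pMonomial_add, pMonomial_single]
        simp only [Finsupp.add_apply, Finsupp.single_apply, hab, if_false, zero_add,
          smul_zero, mul_zero, zero_mul, add_zero]
        ring

end aux

section key
variable {k A : Type*} [CommRing k] [CommRing A] [Algebra k A] {B : Set A}

noncomputable def subExp (p : ℕ) (b : B) (j : {α : B →₀ ℕ // ∀ b, α b < p}) :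
    {α : B →₀ ℕ // ∀ b, α b < p} :=
  ⟨j.1 - Finsupp.single b 1, fun b' =>
    lt_of_le_of_lt (by rw [Finsupp.tsub_apply]; exact Nat.sub_le _ _) (j.2 b')⟩

noncomputable def shiftCoef (p : ℕ) (g : {α : B →₀ ℕ // ∀ b, α b < p} → A) (b : B)
    (j : {α : B →₀ ℕ // ∀ b, α b < p}) : A :=
  if hj : ∀ b', (j.1 + Finsupp.single b 1 : B →₀ ℕ) b' < p then
    ((j.1 b + 1 : ℕ) : A) * g ⟨j.1 + Finsupp.single b 1, hj⟩ else 0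

lemma subExp_add (p : ℕ) (b : B) (j : {α : B →₀ ℕ // ∀ b, α b < p}) (hb : j.1 b ≠ 0) :
    (subExp p b j).1 + Finsupp.single b 1 = j.1 :=
  sub_add_single j.1 b hb

lemma shiftCoef_subExp (p : ℕ) (g : {α : B →₀ ℕ // ∀ b, α b < p} → A) (b : B)
    (j : {α : B →₀ ℕ // ∀ b, α b < p}) (hb : j.1 b ≠ 0) :
    shiftCoef p g b (subExp p b j) = ((j.1 b : ℕ) : A) * g j := by
  have hcond : ∀ b', ((subExp p b j).1 + Finsupp.single b 1 : B →₀ ℕ) b' < p := by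
    rw [subExp_add p b j hb]; exact j.2
  have hx : (⟨(subExp p b j).1 + Finsupp.single b 1, hcond⟩ :
      {α : B →₀ ℕ // ∀ b, α b < p}) = j := Subtype.ext (subExp_add p b j hb)
  have hn1 : (subExp p b j).1 b + 1 = j.1 b := by
    show j.1 b - (Finsupp.single b 1) b + 1 = j.1 b
    rw [Finsupp.single_eq_same]
    omega
  rw [shiftCoef, dif_pos hcond, hx, hn1]

lemma key (p : ℕ) [Fact p.Prime] [CharP A p]
    (bas : Module.Basis B A (KaehlerDifferential k A))
    (hbas : ∀ b : B, bas b = KaehlerDifferential.D k A (b : A)) (n : ℕ) :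
    ∀ (s : Finset {α : B →₀ ℕ // ∀ b, α b < p}) (g : {α : B →₀ ℕ // ∀ b, α b < p} → A),
      (∀ i, g i ∈ Algebra.adjoin k (Set.range fun a : A => a ^ p)) →
      (∀ i ∈ s, (i.1.sum fun _ m => m) ≤ n) →
      (∑ i ∈ s, g i * pMonomial i.1) = 0 → ∀ i ∈ s, g i = 0 := by
  induction n with
  | zero =>
    intro s g hg hdeg hsum i hi
    have h0 : ∀ j, j ∈ s → j.1 = 0 := by
      intro j hj
      have hz : j.1.sum (fun _ m => m) = 0 := Nat.le_zero.mp (hdeg j hj)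
      rw [Finsupp.sum] at hz
      ext x
      by_cases hx : x ∈ j.1.support
      · exact Finset.sum_eq_zero_iff.mp hz x hx
      · exact Finsupp.notMem_support_iff.mp hx
    have hs : s = {i} := Finset.eq_singleton_iff_unique_mem.mpr
      ⟨hi, fun j hj => Subtype.ext (by rw [h0 j hj, h0 i hi])⟩
    rw [hs, Finset.sum_singleton, h0 i hi, pMonomial_zero, mul_one] at hsum
    exact hsum
  | succ n ih =>
    intro s g hg hdeg hsum
    have hnz : ∀ i ∈ s, ∀ b : B, i.1 b ≠ 0 → g i = 0 := by
      intro i hi b hb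
      set Db : Derivation k A A := (bas.coord b).compDer (KaehlerDifferential.D k A) with hDb
      have hD : ∀ b' : B, Db (b' : A) = if b' = b then 1 else 0 := by
        intro b'
        show bas.coord b (KaehlerDifferential.D k A (b' : A)) = _
        rw [← hbas b', Module.Basis.coord_apply, bas.repr_self, Finsupp.single_apply]
      set s' := s.filter (fun j => j.1 b ≠ 0) with hs'
      have hDsum : ∑ j ∈ s, g j * Db (pMonomial j.1) = 0 := by
        have heq : ∀ j ∈ s, g j * Db (pMonomial j.1) = Db (g j * pMonomial j.1) := by
          intro j _
          rw [Db.leibniz, deriv_vanish_adjoin p Db (hg j), smul_zero, add_zero, smul_eq_mul]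
        rw [Finset.sum_congr rfl heq, ← map_sum, hsum, map_zero]
      have hinj : ∀ x ∈ s', ∀ y ∈ s', subExp p b x = subExp p b y → x = y := by
        intro x hx y hy hxy
        refine Subtype.ext ?_
        rw [← subExp_add p b x (Finset.mem_filter.mp hx).2,
          ← subExp_add p b y (Finset.mem_filter.mp hy).2, hxy]
      have hrel : ∑ j ∈ s'.image (subExp p b), shiftCoef p g b j * pMonomial j.1 = 0 := by
        rw [Finset.sum_image hinj]
        calc ∑ j ∈ s', shiftCoef p g b (subExp p b j) * pMonomial (subExp p b j).1
            = ∑ j ∈ s', g j * Db (pMonomial j.1) := by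
              refine Finset.sum_congr rfl fun j hj => ?_
              rw [shiftCoef_subExp p g b j (Finset.mem_filter.mp hj).2,
                deriv_pMonomial Db b hD]
              rw [show ((subExp p b j).1 : B →₀ ℕ) = j.1 - Finsupp.single b 1 from rfl]
              ring
          _ = ∑ j ∈ s, g j * Db (pMonomial j.1) := by
              refine Finset.sum_filter_of_ne fun j hj hne => ?_
              by_contra h0
              refine hne ?_
              rw [deriv_pMonomial Db b hD, h0]
              simp
          _ = 0 := hDsum
      have hg' : ∀ j, shiftCoef p g b j ∈ Algebra.adjoin k (Set.range fun a : A => a ^ p) := by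
        intro j
        rw [shiftCoef]
        split
        · exact mul_mem (Subalgebra.natCast_mem _ _) (hg _)
        · exact zero_mem _
      have hdeg' : ∀ j ∈ s'.image (subExp p b), (j.1.sum fun _ m => m) ≤ n := by
        intro j hj
        obtain ⟨x, hx, rfl⟩ := Finset.mem_image.mp hj
        have h1 := deg_sub_single x.1 b (Finset.mem_filter.mp hx).2
        have h2 := hdeg x (Finset.mem_filter.mp hx).1
        show ((x.1 - Finsupp.single b 1).sum fun _ m => m) ≤ n
        omega
      have hkey := ih (s'.image (subExp p b)) (shiftCoef p g b) hg' hdeg' hrel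
        (subExp p b i) (Finset.mem_image_of_mem _ (Finset.mem_filter.mpr ⟨hi, hb⟩))
      rw [shiftCoef_subExp p g b i hb] at hkey
      have hunit : IsUnit ((i.1 b : ℕ) : A) := by
        have h1 : ((i.1 b : ℕ) : ZMod p) ≠ 0 := by
          rw [Ne, ZMod.natCast_eq_zero_iff]
          exact fun hdvd => hb (Nat.eq_zero_of_dvd_of_lt hdvd (i.2 b))
        have h2 := (h1.isUnit).map (ZMod.castHom (dvd_refl p) A)
        rwa [map_natCast] at h2
      exact (hunit.mul_right_eq_zero).mp hkey
    intro i hi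
    by_cases h0 : i.1 = 0
    · have hsum' : ∑ j ∈ s, g j * pMonomial j.1 = g i * pMonomial i.1 :=
        Finset.sum_eq_single_of_mem i hi (fun j hj hne => by
          have hj0 : j.1 ≠ 0 := fun hj0 => hne (Subtype.ext (hj0.trans h0.symm))
          obtain ⟨b, hb⟩ := Finsupp.ne_iff.mp hj0
          rw [hnz j hj b (by simpa using hb), zero_mul])
      rw [hsum, h0, pMonomial_zero, mul_one] at hsum'
      exact hsum'.symm
    · obtain ⟨b, hb⟩ := Finsupp.ne_iff.mp h0
      exact hnz i hi b (by simpa using hb)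

end key

theorem statement6 {k A : Type*} [CommRing k] [CommRing A] [Algebra k A]
    (p : ℕ) [Fact p.Prime] [CharP A p] (B : Set A)
    (h : IsDifferentialBasis k B) :
    IsPIndependent k p B := by
  obtain ⟨bas, hbas⟩ := h
  unfold IsPIndependent
  rw [linearIndependent_iff']
  intro s g hsum i hi
  have hzero : ∑ j ∈ s, (g j : A) * pMonomial j.1 = 0 := by
    rw [← hsum]
    exact Finset.sum_congr rfl fun j _ =>
      (by rw [Subalgebra.smul_def, smul_eq_mul])
  have hkey := key p bas hbas (s.sup fun j => j.1.sum fun _ m => m) s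
    (fun j => (g j : A)) (fun j => (g j).2)
    (fun j hj => Finset.le_sup (f := fun j : {α : B →₀ ℕ // ∀ b, α b < p} =>
      j.1.sum fun _ m => m) hj) hzero i hi
  exact Subtype.ext hkey
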